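/- (Tweedie's formula, Gaussian case with prior.) Let σ > 0 and let π be a finite Borel measure on ℝ (the prior on the clean value μ). Define the Gaussian kernel g(y, μ) = (2π σ²)^(-1/2) exp( -(y - μ)² / (2σ²) ) and the marginal density p(y) = ∫ g(y, μ) dπ(μ). Fix y₀ ∈ ℝ and assume: (i) p(y₀) > 0; (ii) the functions μ ↦ g(y₀, μ) and μ ↦ |μ| g(y₀, μ) are π-integrable; (iii) there exist δ > 0 and a π-integrable function G such that |∂g(y, μ)/∂y| ≤ G(μ) for all y with |y - y₀| < δ and all μ. Then p is differentiable at y₀, and the posterior mean E[μ | y₀] = ( ∫ μ g(y₀, μ) dπ(μ) ) / p(y₀) satisfies E[μ | y₀] = y₀ + σ² * ( p'(y₀) / p(y₀) ), i.e. the denoised estimate equals y₀ + σ² l'(y₀) where l'(y₀) = d/dy log p(y) at y₀. -/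

import Mathlib

open MeasureTheory

/-- Tweedie's formula, Gaussian case with prior: let `pr` be a finite Borel prior measure on
`ℝ`, let `g y μ = (2πσ²)^(-1/2) exp(-(y-μ)²/(2σ²))` be the Gaussian kernel and
`p y = ∫ g y μ dpr(μ)` the marginal density. If at `y₀` we have `p y₀ > 0`, the functions
`μ ↦ g y₀ μ` and `μ ↦ |μ| g y₀ μ` are `pr`-integrable, and `|∂g(y,μ)/∂y| ≤ G μ` for some
`pr`-integrable `G` and all `y` with `|y - y₀| < δ` (for some `δ > 0`), then `p` is
differentiable at `y₀` and the posterior mean satisfies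
`E[μ|y₀] = (∫ μ g(y₀,μ) dpr(μ)) / p y₀ = y₀ + σ² (p'(y₀)/p(y₀))`. -/
theorem tweedie_formula_gaussian_with_prior
    (σ : ℝ) (hσ : 0 < σ) (pr : Measure ℝ) [IsFiniteMeasure pr]
    (g : ℝ → ℝ → ℝ)
    (hg : g = fun y μ =>
      (2 * Real.pi * σ ^ 2) ^ (-(1 / 2) : ℝ) * Real.exp (-(y - μ) ^ 2 / (2 * σ ^ 2)))
    (p : ℝ → ℝ) (hp : p = fun y => ∫ μ, g y μ ∂pr)
    (y₀ : ℝ) (hpos : 0 < p y₀)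
    (hint₁ : Integrable (fun μ => g y₀ μ) pr)
    (hint₂ : Integrable (fun μ => |μ| * g y₀ μ) pr)
    (δ : ℝ) (hδ : 0 < δ) (G : ℝ → ℝ) (hG : Integrable G pr)
    (hbound : ∀ y μ : ℝ, |y - y₀| < δ → |deriv (fun y => g y μ) y| ≤ G μ) :
    DifferentiableAt ℝ p y₀ ∧
      (∫ μ, μ * g y₀ μ ∂pr) / p y₀ = y₀ + σ ^ 2 * (deriv p y₀ / p y₀) := by
  have hσ2 : (σ : ℝ) ^ 2 ≠ 0 := by positivity
  set c : ℝ := (2 * Real.pi * σ ^ 2) ^ (-(1 / 2) : ℝ) with hc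
  -- derivative of g in y
  have hder : ∀ y μ : ℝ, HasDerivAt (fun y => g y μ) (((μ - y) / σ ^ 2) * g y μ) y := by
    intro y μ
    have h0 : HasDerivAt (fun y : ℝ => (y - μ) ^ 2) (2 * (y - μ)) y := by
      simpa using ((hasDerivAt_id y).sub_const μ).fun_pow 2
    have h1 : HasDerivAt (fun y : ℝ => -(y - μ) ^ 2 / (2 * σ ^ 2)) (-(y - μ) / σ ^ 2) y := by
      have := h0.fun_neg.div_const (2 * σ ^ 2)
      refine this.congr_deriv ?_
      field_simp
    have h2 := (h1.exp).const_mul c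
    rw [hg]
    refine h2.congr_deriv ?_
    ring
  -- continuity in μ
  have hcont : ∀ y : ℝ, Continuous fun μ => g y μ := by
    intro y; rw [hg]; continuity
  have hcont' : Continuous fun μ => ((μ - y₀) / σ ^ 2) * g y₀ μ := by
    exact (((continuous_id.sub continuous_const).div_const _).mul (hcont y₀))
  have key := hasDerivAt_integral_of_dominated_loc_of_deriv_le (F := fun y μ => g y μ)
    (F' := fun y μ => ((μ - y) / σ ^ 2) * g y μ) (bound := G) (Metric.ball_mem_nhds y₀ hδ)
    (Filter.Eventually.of_forall fun y => (hcont y).aestronglyMeasurable)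
    hint₁ hcont'.aestronglyMeasurable
    (Filter.Eventually.of_forall fun μ => ?_) hG
    (Filter.Eventually.of_forall fun μ y _ => hder y μ)
  swap
  · intro y hy
    have hyd : |y - y₀| < δ := by
      simpa [Metric.mem_ball, Real.dist_eq] using hy
    have := hbound y μ hyd
    have hdeq : deriv (fun y => g y μ) y = ((μ - y) / σ ^ 2) * g y μ := (hder y μ).deriv
    rw [hdeq] at this
    rw [Real.norm_eq_abs]
    exact this
  obtain ⟨hFint, hHD⟩ := key
  have hpd : HasDerivAt p (∫ μ, ((μ - y₀) / σ ^ 2) * g y₀ μ ∂pr) y₀ := by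
    rw [hp]; exact hHD
  refine ⟨hpd.differentiableAt, ?_⟩
  have hderiv : deriv p y₀ = ∫ μ, ((μ - y₀) / σ ^ 2) * g y₀ μ ∂pr := hpd.deriv
  -- integrability of μ * g y₀ μ
  have hgnn : ∀ μ : ℝ, 0 ≤ g y₀ μ := by
    intro μ; rw [hg]; positivity
  have hintμ : Integrable (fun μ => μ * g y₀ μ) pr := by
    refine hint₂.mono' ?_ (Filter.Eventually.of_forall fun μ => ?_)
    · exact (continuous_id.mul (hcont y₀)).aestronglyMeasurable
    · simp [Real.norm_eq_abs, abs_mul, abs_of_nonneg (hgnn μ)]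
  -- compute integral
  have hsplit : ∫ μ, ((μ - y₀) / σ ^ 2) * g y₀ μ ∂pr
      = ((∫ μ, μ * g y₀ μ ∂pr) - y₀ * ∫ μ, g y₀ μ ∂pr) / σ ^ 2 := by
    have heq : (fun μ => (μ - y₀) / σ ^ 2 * g y₀ μ)
        = fun μ => (σ ^ 2)⁻¹ * (μ * g y₀ μ - y₀ * g y₀ μ) := by
      funext μ; field_simp
    rw [heq, integral_const_mul, integral_sub hintμ (hint₁.const_mul y₀),
      integral_const_mul]
    ring
  have hpy : p y₀ = ∫ μ, g y₀ μ ∂pr := by rw [hp]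
  rw [hderiv, hsplit, ← hpy]
  field_simp
  ring
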